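/- Let f:ℝ³→[0,∞) be measurable with ∫_{ℝ³}f(v)dv=1 and ∫_{ℝ³}|v|³f(v)dv<∞, and set u=∫_{ℝ³}v f(v)dv. Then ∫_{ℝ³}∫_{ℝ³} f(v) f(w) |v−w|³ dv dw ≥ ( ∫_{ℝ³} |v−u|² f(v) dv )^{3/2}. -/

import Mathlib

open MeasureTheory Real Metric Filter Set
open scoped RealInnerProductSpace Topology ENNReal
noncomputable section

/-- The velocity space ℝ³. -/
abbrev V : Type := EuclideanSpace ℝ (Fin 3)

/-- Surface measure on the unit sphere S² ⊂ ℝ³ (total mass 4π). -/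
def S2 : Measure (sphere (0:V) 1) := (volume : Measure V).toSphere

/-- The weight ⟨v⟩ = √(1+|v|²). -/
def jap (v : V) : ℝ := Real.sqrt (1 + ‖v‖^2)

/-- The weighted L¹ norm ‖f‖_{L¹_η} = ∫ |f(v)| ⟨v⟩^η dv. -/
def L1norm (f : V → ℝ) (η : ℝ) : ℝ := ∫ v : V, |f v| * (jap v)^η

/-- The weighted Lᵖ norm ‖f‖_{L^p_η} = (∫ |f(v)|^p ⟨v⟩^{pη} dv)^{1/p}. -/
def Lpnorm (f : V → ℝ) (p η : ℝ) : ℝ := (∫ v : V, |f v|^p * (jap v)^(p*η)) ^ (1/p)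

/-- Membership f ∈ L¹_η(ℝ³). -/
def MemL1w (f : V → ℝ) (η : ℝ) : Prop :=
  Integrable (fun v : V => |f v| * (jap v)^η)

/-- Membership f ∈ L^p_η(ℝ³). -/
def MemLpw (f : V → ℝ) (p η : ℝ) : Prop :=
  Integrable (fun v : V => |f v|^p * (jap v)^(p*η))

/-- A_ζ[ψ](v,w) = (1/4π) ∫_{S²} (ψ(v')+ψ(w')−ψ(v)−ψ(w)) dσ, with
v' = v + (ζ/2)(|q|σ−q), w' = w − (ζ/2)(|q|σ−q), q = v−w. -/
def Aop (ζ : ℝ) (ψ : V → ℝ) (v w : V) : ℝ :=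
  (4*π)⁻¹ * ∫ (σ : sphere (0:V) 1),
    (ψ (v + (ζ/2) • (‖v - w‖ • (σ:V) - (v - w)))
      + ψ (w - (ζ/2) • (‖v - w‖ • (σ:V) - (v - w))) - ψ v - ψ w) ∂S2

/-- J_e[ψ](v,w) = (1/4π) ∫_{S²} (ψ(ṽ*)−ψ(v)) dσ where ṽ* = v − κ(q−|q|σ), q = v−w. -/
def Jop (κ : ℝ) (ψ : V → ℝ) (v w : V) : ℝ :=
  (4*π)⁻¹ * ∫ (σ : sphere (0:V) 1),
    (ψ (v - κ • ((v - w) - ‖v - w‖ • (σ:V))) - ψ v) ∂S2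

/-- The gain part 𝒬⁺(f,f) of the inelastic Boltzmann operator with restitution
coefficient ε; with ζ = (1+ε)/2 and q = v−w,
'v = v + (ζ/2ε)(|q|σ−q) and 'w = w − (ζ/2ε)(|q|σ−q). -/
def Qplus (ε : ℝ) (f : V → ℝ) (v : V) : ℝ :=
  (4*π*ε^2)⁻¹ * ∫ w : V, (∫ (σ : sphere (0:V) 1),
      ‖v - w‖ * f (v + ((1+ε)/(4*ε)) • (‖v - w‖ • (σ:V) - (v - w)))
        * f (w - ((1+ε)/(4*ε)) • (‖v - w‖ • (σ:V) - (v - w))) ∂S2)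

/-- The loss part 𝒬⁻(f,f)(v) = f(v) ∫ |v−w| f(w) dw. -/
def Qminus (f : V → ℝ) (v : V) : ℝ := f v * ∫ w : V, ‖v - w‖ * f w

/-- The gain part ℒ⁺ of the linear scattering operator with host distribution F1,
mean free path lam, mass ratio α = m₁/(1+m₁) and inelasticity β = (1−e)/2;
with q = v−w, γ = α(1−β)/(1−2β) = α(1+e)/(2e), γ̄ = (1−α)(1−β)/(1−2β) = (1−α)(1+e)/(2e),
ṽ⋆ = v − γ(q−|q|σ), w̃⋆ = w + γ̄(q−|q|σ). -/
def Lplus (m₁ lam e : ℝ) (F1 f : V → ℝ) (v : V) : ℝ :=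
  (4*π*lam*e^2)⁻¹ * ∫ w : V, (∫ (σ : sphere (0:V) 1),
      ‖v - w‖ * f (v - ((m₁/(1+m₁)) * (1+e)/(2*e)) • ((v - w) - ‖v - w‖ • (σ:V)))
        * F1 (w + ((1/(1+m₁)) * (1+e)/(2*e)) • ((v - w) - ‖v - w‖ • (σ:V))) ∂S2)

/-- The collision frequency ν(v) = (1/λ) ∫ |v−w| F₁(w) dw. -/
def nufreq (lam : ℝ) (F1 : V → ℝ) (v : V) : ℝ := lam⁻¹ * ∫ w : V, ‖v - w‖ * F1 w

set_option maxHeartbeats 1000000 in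
/-- Jensen-type lower bound: for a probability density f with finite third moment
and bulk velocity u, ∬ f(v)f(w)|v−w|³ dv dw ≥ (∫ |v−u|² f(v) dv)^{3/2}. -/
theorem jensen_third_moment (f : V → ℝ) (hfmeas : Measurable f)
    (hfpos : ∀ v, 0 ≤ f v) (hfint : Integrable f) (hfmass : (∫ v : V, f v) = 1)
    (hf3 : Integrable (fun v : V => ‖v‖^3 * f v)) :
    (∫ v : V, ∫ w : V, f v * f w * ‖v - w‖^3)
      ≥ (∫ v : V, ‖v - (∫ w : V, f w • w)‖^2 * f v)^((3:ℝ)/2) := by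
  set u : V := ∫ w : V, f w • w with hu
  -- one-variable integrabilities
  have h1 : Integrable (fun v : V => ‖v‖ * f v) := by
    refine (hfint.add hf3).mono' ((measurable_norm.mul hfmeas).aestronglyMeasurable) ?_
    filter_upwards with v
    have h := hfpos v; have hn := norm_nonneg v
    rw [Real.norm_eq_abs, abs_of_nonneg (mul_nonneg hn h)]
    simp only [Pi.add_apply]
    nlinarith [mul_nonneg (mul_nonneg hn (sq_nonneg (‖v‖ - 1))) h,
      mul_nonneg (sq_nonneg (2*‖v‖-1)) h]
  have h2 : Integrable (fun v : V => ‖v‖^2 * f v) := by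
    refine (hfint.add hf3).mono'
      (((measurable_norm.pow_const 2).mul hfmeas).aestronglyMeasurable) ?_
    filter_upwards with v
    have h := hfpos v; have hn := norm_nonneg v
    rw [Real.norm_eq_abs, abs_of_nonneg (mul_nonneg (pow_nonneg hn 2) h)]
    simp only [Pi.add_apply]
    nlinarith [mul_nonneg (mul_nonneg hn (sq_nonneg (‖v‖ - 1))) h,
      mul_nonneg (sq_nonneg (2*‖v‖-1)) h]
  have hIu : Integrable (fun v : V => f v • v) := by
    refine h1.mono' (hfmeas.aestronglyMeasurable.smul aestronglyMeasurable_id) ?_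
    filter_upwards with v
    rw [norm_smul, Real.norm_eq_abs, abs_of_nonneg (hfpos v), mul_comm]
  have hinner_u : Integrable (fun v : V => ⟪v, u⟫ * f v) := by
    refine (h1.const_mul ‖u‖).mono'
      (((measurable_id.inner measurable_const).mul hfmeas).aestronglyMeasurable) ?_
    filter_upwards with v
    rw [Real.norm_eq_abs, abs_mul, abs_of_nonneg (hfpos v)]
    have := abs_real_inner_le_norm v u
    have h := hfpos v; have hn := norm_nonneg v
    calc |⟪v, u⟫| * f v ≤ (‖v‖ * ‖u‖) * f v := by
          exact mul_le_mul_of_nonneg_right this h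
      _ = ‖u‖ * (‖v‖ * f v) := by ring
  -- ∫ ⟪v,u⟫ f = ‖u‖²
  have hinner_int : (∫ v : V, ⟪v, u⟫ * f v) = ‖u‖^2 := by
    have : (fun v : V => ⟪v, u⟫ * f v) = fun v : V => ⟪u, f v • v⟫ := by
      funext v
      rw [real_inner_smul_right, real_inner_comm]; ring
    rw [this, integral_inner hIu u, ← hu, real_inner_self_eq_norm_sq]
  have hm2 : (∫ v : V, ‖v‖^2 * f v) = ∫ v : V, ‖v‖^2 * f v := rfl
  set m2 : ℝ := ∫ v : V, ‖v‖^2 * f v with hm2def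
  -- T = m2 - ‖u‖²
  have hconst : Integrable (fun v : V => ‖u‖^2 * f v) := hfint.const_mul _
  have hT : (∫ v : V, ‖v - u‖^2 * f v) = m2 - ‖u‖^2 := by
    have hexp : (fun v : V => ‖v - u‖^2 * f v)
        = fun v : V => ‖v‖^2 * f v - 2 * (⟪v, u⟫ * f v) + ‖u‖^2 * f v := by
      funext v
      rw [norm_sub_sq_real]; ring
    have hsub : Integrable (fun v : V => ‖v‖^2 * f v - 2 * (⟪v, u⟫ * f v)) :=
      h2.sub (hinner_u.const_mul 2)
    rw [hexp, integral_add hsub hconst, integral_sub h2 (hinner_u.const_mul 2),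
      integral_const_mul, hinner_int, integral_const_mul, hfmass]
    ring
  -- product-space integrabilities
  have hp3 : Integrable (fun p : V × V => f p.1 * f p.2 * ‖p.1 - p.2‖^3)
      (volume.prod volume) := by
    have hb : Integrable (fun p : V × V =>
        4*((‖p.1‖^3 * f p.1) * f p.2 + f p.1 * (‖p.2‖^3 * f p.2))) (volume.prod volume) :=
      ((hf3.mul_prod hfint).add (hfint.mul_prod hf3)).const_mul 4
    refine hb.mono' ?_ ?_
    · exact (((hfmeas.comp measurable_fst).mul (hfmeas.comp measurable_snd)).mul
        (((measurable_fst.sub measurable_snd).norm).pow_const 3)).aestronglyMeasurable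
    · filter_upwards with p
      have h1' := hfpos p.1; have h2' := hfpos p.2
      have hn1 := norm_nonneg p.1; have hn2 := norm_nonneg p.2
      have hnn : ‖p.1 - p.2‖ ≤ ‖p.1‖ + ‖p.2‖ := norm_sub_le _ _
      have hnsub := norm_nonneg (p.1 - p.2)
      rw [Real.norm_eq_abs, abs_of_nonneg (by positivity)]
      have key : ‖p.1 - p.2‖^3 ≤ 4*(‖p.1‖^3 + ‖p.2‖^3) := by
        calc ‖p.1 - p.2‖^3 ≤ (‖p.1‖ + ‖p.2‖)^3 := pow_le_pow_left₀ hnsub hnn 3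
          _ ≤ 4*(‖p.1‖^3 + ‖p.2‖^3) := by nlinarith [sq_nonneg (‖p.1‖ - ‖p.2‖), mul_nonneg hn1 hn2, sq_nonneg (‖p.1‖ + ‖p.2‖)]
      calc f p.1 * f p.2 * ‖p.1 - p.2‖^3 ≤ f p.1 * f p.2 * (4*(‖p.1‖^3 + ‖p.2‖^3)) := by
            exact mul_le_mul_of_nonneg_left key (by positivity)
        _ = 4*((‖p.1‖^3 * f p.1) * f p.2 + f p.1 * (‖p.2‖^3 * f p.2)) := by ring

  have hp2 : Integrable (fun p : V × V => f p.1 * f p.2 * ‖p.1 - p.2‖^2)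
      (volume.prod volume) := by
    have hb : Integrable (fun p : V × V =>
        2*((‖p.1‖^2 * f p.1) * f p.2 + f p.1 * (‖p.2‖^2 * f p.2))) (volume.prod volume) :=
      ((h2.mul_prod hfint).add (hfint.mul_prod h2)).const_mul 2
    refine hb.mono' ?_ ?_
    · exact (((hfmeas.comp measurable_fst).mul (hfmeas.comp measurable_snd)).mul
        (((measurable_fst.sub measurable_snd).norm).pow_const 2)).aestronglyMeasurable
    · filter_upwards with p
      have h1' := hfpos p.1; have h2' := hfpos p.2
      have hn1 := norm_nonneg p.1; have hn2 := norm_nonneg p.2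
      have hnn : ‖p.1 - p.2‖ ≤ ‖p.1‖ + ‖p.2‖ := norm_sub_le _ _
      have hnsub := norm_nonneg (p.1 - p.2)
      rw [Real.norm_eq_abs, abs_of_nonneg (by positivity)]
      have key : ‖p.1 - p.2‖^2 ≤ 2*(‖p.1‖^2 + ‖p.2‖^2) := by
        nlinarith [sq_nonneg (‖p.1‖ - ‖p.2‖)]
      calc f p.1 * f p.2 * ‖p.1 - p.2‖^2 ≤ f p.1 * f p.2 * (2*(‖p.1‖^2 + ‖p.2‖^2)) := by
            exact mul_le_mul_of_nonneg_left key (by positivity)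
        _ = 2*((‖p.1‖^2 * f p.1) * f p.2 + f p.1 * (‖p.2‖^2 * f p.2)) := by ring
  have hpInner : Integrable (fun p : V × V => f p.1 * f p.2 * ⟪p.1, p.2⟫)
      (volume.prod volume) := by
    refine (h1.mul_prod h1).mono' ?_ ?_
    · exact (((hfmeas.comp measurable_fst).mul (hfmeas.comp measurable_snd)).mul
        (measurable_fst.inner measurable_snd)).aestronglyMeasurable
    · filter_upwards with p
      have h1' := hfpos p.1; have h2' := hfpos p.2
      have hcs := abs_real_inner_le_norm p.1 p.2
      rw [Real.norm_eq_abs, abs_mul, abs_mul, abs_of_nonneg h1', abs_of_nonneg h2']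
      calc f p.1 * f p.2 * |⟪p.1, p.2⟫| ≤ f p.1 * f p.2 * (‖p.1‖ * ‖p.2‖) := by
            exact mul_le_mul_of_nonneg_left hcs (by positivity)
        _ = (‖p.1‖ * f p.1) * (‖p.2‖ * f p.2) := by ring
  -- ∫∫ f f ⟪v,w⟫ = ‖u‖²
  have hC : (∫ p : V × V, f p.1 * f p.2 * ⟪p.1, p.2⟫ ∂(volume.prod volume)) = ‖u‖^2 := by
    rw [MeasureTheory.integral_prod _ hpInner]
    have hstep : ∀ v : V, (∫ w : V, f v * f w * ⟪v, w⟫) = ⟪v, u⟫ * f v := by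
      intro v
      have e : (fun w : V => f v * f w * ⟪v, w⟫) = fun w : V => f v * ⟪v, f w • w⟫ := by
        funext w; rw [real_inner_smul_right]; ring
      rw [e, integral_const_mul, integral_inner hIu v, ← hu, mul_comm]
    simp_rw [hstep]
    exact hinner_int
  -- L₂ over the product space
  have hL2 : (∫ p : V × V, f p.1 * f p.2 * ‖p.1 - p.2‖^2 ∂(volume.prod volume))
      = 2*(m2 - ‖u‖^2) := by
    have hexp : (fun p : V × V => f p.1 * f p.2 * ‖p.1 - p.2‖^2)
        = fun p : V × V => ((‖p.1‖^2 * f p.1) * f p.2 + f p.1 * (‖p.2‖^2 * f p.2))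
            - 2 * (f p.1 * f p.2 * ⟪p.1, p.2⟫) := by
      funext p
      rw [norm_sub_sq_real]; ring
    have hA : Integrable (fun p : V × V =>
        (‖p.1‖^2 * f p.1) * f p.2 + f p.1 * (‖p.2‖^2 * f p.2)) (volume.prod volume) :=
      (h2.mul_prod hfint).add (hfint.mul_prod h2)
    rw [hexp, integral_sub hA (hpInner.const_mul 2),
      integral_add (h2.mul_prod hfint) (hfint.mul_prod h2),
      integral_prod_mul (fun v : V => ‖v‖^2 * f v) f,
      integral_prod_mul f (fun v : V => ‖v‖^2 * f v),
      integral_const_mul, hC, hfmass, ← hm2def]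
    ring
  -- lintegral side: Hölder
  have hofG : Measurable (fun p : V × V => ENNReal.ofReal (f p.1) * ENNReal.ofReal (f p.2)) :=
    ((hfmeas.comp measurable_fst).ennreal_ofReal).mul ((hfmeas.comp measurable_snd).ennreal_ofReal)
  have hofN : Measurable (fun p : V × V => ENNReal.ofReal ‖p.1 - p.2‖) :=
    ((measurable_fst.sub measurable_snd).norm).ennreal_ofReal
  set G : V × V → ℝ≥0∞ := fun p => ENNReal.ofReal (f p.1) * ENNReal.ofReal (f p.2) with hGdef
  set N : V × V → ℝ≥0∞ := fun p => ENNReal.ofReal ‖p.1 - p.2‖ with hNdef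
  have hGmass : (∫⁻ p : V × V, G p ∂(volume.prod volume)) = 1 := by
    rw [hGdef]
    rw [MeasureTheory.lintegral_prod_mul hfmeas.ennreal_ofReal.aemeasurable
      hfmeas.ennreal_ofReal.aemeasurable]
    rw [← ofReal_integral_eq_lintegral_ofReal hfint (Filter.Eventually.of_forall hfpos), hfmass]
    simp
  set X : ℝ≥0∞ := ∫⁻ p : V × V, G p * N p ^ 2 ∂(volume.prod volume) with hXdef
  set Y : ℝ≥0∞ := ∫⁻ p : V × V, G p * N p ^ 3 ∂(volume.prod volume) with hYdef
  have hconj : Real.HolderConjugate 3 (3/2) := by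
    rw [Real.holderConjugate_iff]; constructor <;> norm_num
  have holder : X ≤ Y ^ ((2:ℝ)/3) := by
    have ha : Measurable (fun p : V × V => G p ^ ((1:ℝ)/3)) := hofG.pow_const _
    have hb : Measurable (fun p : V × V => G p ^ ((2:ℝ)/3) * N p ^ 2) :=
      (hofG.pow_const _).mul (hofN.pow_const 2)
    have h := ENNReal.lintegral_mul_le_Lp_mul_Lq (volume.prod volume) hconj
      ha.aemeasurable hb.aemeasurable
    have e1 : ∀ p : V × V,
        ((fun p => G p ^ ((1:ℝ)/3)) * fun p => G p ^ ((2:ℝ)/3) * N p ^ 2) p = G p * N p ^ 2 := by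
      intro p
      simp only [Pi.mul_apply]
      rw [← mul_assoc, ← ENNReal.rpow_add_of_nonneg _ _ (by norm_num) (by norm_num)]
      norm_num
    have e2 : ∀ p : V × V, (G p ^ ((1:ℝ)/3)) ^ (3:ℝ) = G p := by
      intro p
      rw [← ENNReal.rpow_mul]
      norm_num
    have e3 : ∀ p : V × V, (G p ^ ((2:ℝ)/3) * N p ^ 2) ^ ((3:ℝ)/2) = G p * N p ^ 3 := by
      intro p
      rw [ENNReal.mul_rpow_of_nonneg _ _ (by norm_num), ← ENNReal.rpow_mul,
        ← ENNReal.rpow_natCast (N p) 2, ← ENNReal.rpow_mul]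
      norm_num
    rw [lintegral_congr e1] at h
    simp_rw [e2, e3] at h
    rw [hGmass] at h
    simpa using h.trans_eq (by norm_num [hYdef])
  -- identify X and Y with the real integrals
  have hL2nonneg : (0:ℝ) ≤ 2*(m2 - ‖u‖^2) := by
    rw [← hL2]
    exact integral_nonneg fun p =>
      mul_nonneg (mul_nonneg (hfpos p.1) (hfpos p.2)) (by positivity)
  have hXr : ENNReal.ofReal (2*(m2 - ‖u‖^2)) = X := by
    rw [← hL2, ofReal_integral_eq_lintegral_ofReal hp2
      (Filter.Eventually.of_forall fun p =>
        mul_nonneg (mul_nonneg (hfpos p.1) (hfpos p.2)) (by positivity))]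
    refine lintegral_congr fun p => ?_
    rw [ENNReal.ofReal_mul (mul_nonneg (hfpos p.1) (hfpos p.2)),
      ENNReal.ofReal_mul (hfpos p.1), ENNReal.ofReal_pow (norm_nonneg _)]
  have hL3nonneg : (0:ℝ) ≤ ∫ p : V × V, f p.1 * f p.2 * ‖p.1 - p.2‖^3 ∂(volume.prod volume) :=
    integral_nonneg fun p =>
      mul_nonneg (mul_nonneg (hfpos p.1) (hfpos p.2)) (by positivity)
  have hYr : ENNReal.ofReal (∫ p : V × V, f p.1 * f p.2 * ‖p.1 - p.2‖^3 ∂(volume.prod volume))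
      = Y := by
    rw [ofReal_integral_eq_lintegral_ofReal hp3
      (Filter.Eventually.of_forall fun p =>
        mul_nonneg (mul_nonneg (hfpos p.1) (hfpos p.2)) (by positivity))]
    refine lintegral_congr fun p => ?_
    rw [ENNReal.ofReal_mul (mul_nonneg (hfpos p.1) (hfpos p.2)),
      ENNReal.ofReal_mul (hfpos p.1), ENNReal.ofReal_pow (norm_nonneg _)]
  -- conclude L2^{3/2} ≤ L3
  have hmain : (2*(m2 - ‖u‖^2)) ^ ((3:ℝ)/2)
      ≤ ∫ p : V × V, f p.1 * f p.2 * ‖p.1 - p.2‖^3 ∂(volume.prod volume) := by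
    rw [← ENNReal.ofReal_le_ofReal_iff hL3nonneg, hYr,
      ← ENNReal.ofReal_rpow_of_nonneg hL2nonneg (by norm_num), hXr]
    calc X ^ ((3:ℝ)/2) ≤ (Y ^ ((2:ℝ)/3)) ^ ((3:ℝ)/2) :=
          ENNReal.rpow_le_rpow holder (by norm_num)
      _ = Y := by rw [← ENNReal.rpow_mul]; norm_num
  -- final assembly
  have hiter : (∫ v : V, ∫ w : V, f v * f w * ‖v - w‖^3)
      = ∫ p : V × V, f p.1 * f p.2 * ‖p.1 - p.2‖^3 ∂(volume.prod volume) :=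
    MeasureTheory.integral_integral hp3
  have hTnn : (0:ℝ) ≤ ∫ v : V, ‖v - u‖^2 * f v :=
    integral_nonneg fun v => mul_nonneg (by positivity) (hfpos v)
  rw [ge_iff_le, hiter]
  calc (∫ v : V, ‖v - u‖^2 * f v) ^ ((3:ℝ)/2)
      ≤ (2*(m2 - ‖u‖^2)) ^ ((3:ℝ)/2) := by
        apply Real.rpow_le_rpow hTnn _ (by norm_num)
        have h0 := hTnn
        rw [hT] at h0
        rw [hT]; linarith
    _ ≤ _ := hmain
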